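/- Let $\mu_1,\ldots,\mu_m$ and $\nu_1,\ldots,\nu_m$ be probability measures on $\mathbb{R}^d$, $\alpha > 1$, and $p_1,\ldots,p_m \geq 0$ with $\sum_i p_i = 1$. Then $\exp\big((\alpha-1) D_\alpha\big(\sum_i p_i \mu_i \,\|\, \sum_i p_i \nu_i\big)\big) \leq \sum_i p_i \exp\big((\alpha-1) D_\alpha(\mu_i \| \nu_i)\big)$. -/

import Mathlib

open MeasureTheory ENNReal Classical

/-- Rényi divergence of order `α > 1` between measures on `ℝ^d`:
`(α-1)⁻¹ log ∫ (dμ/dν)^α dν` if `μ ≪ ν`, and `∞` otherwise. -/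

noncomputable def renyiDiv {d : ℕ} (α : ℝ) (μ ν : Measure (EuclideanSpace ℝ (Fin d))) : EReal :=
  if μ ≪ ν then (((α - 1)⁻¹ : ℝ) : EReal) * ENNReal.log (∫⁻ x, μ.rnDeriv ν x ^ α ∂ν) else ⊤

lemma mRpow (y : ℝ) : Measurable (fun x : ℝ≥0∞ => x ^ y) :=
  (ENNReal.continuous_rpow_const).measurable

/-- homogeneity of `(a,b) ↦ a^α b^(1-α)` in `ℝ≥0∞`, for finite scalar `p`. -/
lemma aux_hom {α : ℝ} (hα : 1 < α) {p : ℝ≥0∞} (hpt : p ≠ ∞) (a b : ℝ≥0∞) :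
    (p * a) ^ α * (p * b) ^ (1 - α) = p * (a ^ α * b ^ (1 - α)) := by
  have hα0 : (0:ℝ) < α := by linarith
  have h1α : (1:ℝ) - α < 0 := by linarith
  rcases eq_or_ne p 0 with rfl | hp0
  · simp [ENNReal.zero_rpow_of_pos hα0]
  rcases eq_or_ne b 0 with rfl | hb0
  · rcases eq_or_ne a 0 with rfl | ha0
    · simp [ENNReal.zero_rpow_of_pos hα0]
    · have h1 : a ^ α ≠ 0 := by
        intro h
        rw [ENNReal.rpow_eq_zero_iff] at h
        rcases h with ⟨h, _⟩ | ⟨_, h⟩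
        · exact ha0 h
        · linarith
      have h2 : (p * a) ^ α ≠ 0 := by
        intro h
        rw [ENNReal.rpow_eq_zero_iff] at h
        rcases h with ⟨h, _⟩ | ⟨_, h⟩
        · exact (mul_ne_zero hp0 ha0) h
        · linarith
      rw [mul_zero, ENNReal.zero_rpow_of_neg h1α, ENNReal.mul_top h2, ENNReal.mul_top h1,
        ENNReal.mul_top hp0]
  · rw [ENNReal.mul_rpow_of_nonneg _ _ hα0.le, ENNReal.mul_rpow_of_ne_zero hp0 hb0,
      mul_mul_mul_comm, ← ENNReal.rpow_add _ _ hp0 hpt]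
    have : α + (1 - α) = 1 := by ring
    rw [this, ENNReal.rpow_one]

/-- Pointwise Hölder-type sum inequality in `ℝ≥0∞`. -/
lemma aux_holder_sum {m : ℕ} {α : ℝ} (hα : 1 < α) (a b : Fin m → ℝ≥0∞) :
    (∑ i, a i) ^ α * (∑ i, b i) ^ (1 - α) ≤ ∑ i, a i ^ α * b i ^ (1 - α) := by
  have hα0 : (0:ℝ) < α := by linarith
  have h1α : (1:ℝ) - α < 0 := by linarith
  by_cases hb0 : ∃ i, b i = 0 ∧ a i ≠ 0
  · obtain ⟨i, hbi, hai⟩ := hb0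
    have hterm : a i ^ α * b i ^ (1 - α) = ⊤ := by
      rw [hbi, ENNReal.zero_rpow_of_neg h1α, ENNReal.mul_top]
      intro h
      rw [ENNReal.rpow_eq_zero_iff] at h
      rcases h with ⟨h, _⟩ | ⟨_, h⟩
      · exact hai h
      · linarith
    calc (∑ i, a i) ^ α * (∑ i, b i) ^ (1 - α) ≤ ⊤ := le_top
      _ = a i ^ α * b i ^ (1 - α) := hterm.symm
      _ ≤ ∑ i, a i ^ α * b i ^ (1 - α) :=
          Finset.single_le_sum (f := fun j => a j ^ α * b j ^ (1 - α)) (fun j _ => zero_le) (Finset.mem_univ i)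
  push_neg at hb0
  by_cases hbt : ∃ i, b i = ∞
  · obtain ⟨i, hbi⟩ := hbt
    have : (∑ i, b i) = ∞ := ENNReal.sum_eq_top.2 ⟨i, Finset.mem_univ i, hbi⟩
    rw [this, ENNReal.top_rpow_of_neg h1α, mul_zero]
    exact zero_le
  push_neg at hbt
  by_cases hB : ∑ i, b i = 0
  · have hb : ∀ i, b i = 0 := by
      intro i
      exact (Finset.sum_eq_zero_iff.1 hB) i (Finset.mem_univ i)
    have ha : ∑ i, a i = 0 := Finset.sum_eq_zero fun i _ => hb0 i (hb i)
    rw [ha, ENNReal.zero_rpow_of_pos hα0, zero_mul]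
    exact zero_le
  -- main case
  have hpq : α.HolderConjugate (α / (α - 1)) := Real.HolderConjugate.conjExponent hα
  set q : ℝ := α / (α - 1) with hq
  set f : Fin m → ℝ≥0∞ := fun i => a i * b i ^ ((1 - α) / α) with hf
  set g : Fin m → ℝ≥0∞ := fun i => b i ^ ((α - 1) / α) with hg
  have hαne : α - 1 ≠ 0 := by linarith
  have hpos1 : (0:ℝ) < (α - 1) / α := div_pos (by linarith) hα0
  have hposq : (0:ℝ) < q := div_pos hα0 (by linarith)
  have key : ∀ i, f i * g i = a i ∧ f i ^ α = a i ^ α * b i ^ (1 - α) ∧ g i ^ q = b i := by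
    intro i
    rcases eq_or_ne (b i) 0 with hbi | hbi
    · have hai := hb0 i hbi
      refine ⟨?_, ?_, ?_⟩
      · simp [hf, hg, hbi, hai, ENNReal.zero_rpow_of_pos hpos1]
      · simp [hf, hg, hbi, hai, ENNReal.zero_rpow_of_pos hα0]
      · simp [hg, hbi, ENNReal.zero_rpow_of_pos hpos1, ENNReal.zero_rpow_of_pos hposq]
    · refine ⟨?_, ?_, ?_⟩
      · rw [hf, hg, mul_assoc, ← ENNReal.rpow_add _ _ hbi (hbt i)]
        have : (1 - α) / α + (α - 1) / α = 0 := by ring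
        rw [this, ENNReal.rpow_zero, mul_one]
      · rw [hf, ENNReal.mul_rpow_of_nonneg _ _ hα0.le, ← ENNReal.rpow_mul,
          div_mul_cancel₀ _ hα0.ne']
      · rw [hg, ← ENNReal.rpow_mul, hq, div_mul_div_comm, mul_comm (α-1) α,
          div_self (by positivity)]
        exact ENNReal.rpow_one _
  have hmf : Measurable f := Measurable.mul (measurable_of_countable a) (measurable_of_countable _)
  have hmg : Measurable g := measurable_of_countable _
  have holder := ENNReal.lintegral_mul_le_Lp_mul_Lq (Measure.count : Measure (Fin m)) hpq
    hmf.aemeasurable hmg.aemeasurable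
  rw [lintegral_count, lintegral_count, lintegral_count, tsum_fintype, tsum_fintype,
    tsum_fintype] at holder
  have hA : ∑ i, a i ≤ (∑ i, f i ^ α) ^ (1/α) * (∑ i, g i ^ q) ^ (1/q) := by
    refine le_trans (le_of_eq ?_) holder
    exact Finset.sum_congr rfl fun i _ => ((key i).1).symm
  rw [Finset.sum_congr rfl fun i _ => (key i).2.1, Finset.sum_congr rfl fun i _ => (key i).2.2]
    at hA
  set S := ∑ i, a i ^ α * b i ^ (1 - α)
  set B := ∑ i, b i with hBdef
  have hBt : B ≠ ∞ := ENNReal.sum_ne_top.2 fun i _ => hbt i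
  have hApow : (∑ i, a i) ^ α ≤ S * B ^ (α - 1) := by
    calc (∑ i, a i) ^ α ≤ (S ^ (1/α) * B ^ (1/q)) ^ α :=
          ENNReal.rpow_le_rpow hA hα0.le
      _ = S * B ^ (α - 1) := by
          rw [ENNReal.mul_rpow_of_nonneg _ _ hα0.le, ← ENNReal.rpow_mul, ← ENNReal.rpow_mul,
            one_div_mul_cancel hα0.ne', ENNReal.rpow_one]
          congr 1
          congr 1
          rw [hq]
          field_simp
  calc (∑ i, a i) ^ α * B ^ (1 - α) ≤ S * B ^ (α - 1) * B ^ (1 - α) :=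
        mul_le_mul_left hApow _
    _ = S := by
        rw [mul_assoc, ← ENNReal.rpow_add _ _ hB hBt]
        norm_num

lemma aux_withDensity_finset_sum {X : Type*} [MeasurableSpace X] (μ : Measure X) {ι : Type*}
    (s : Finset ι) (f : ι → X → ℝ≥0∞) (hf : ∀ i, Measurable (f i)) :
    μ.withDensity (fun x => ∑ i ∈ s, f i x) = ∑ i ∈ s, μ.withDensity (f i) := by
  classical
  induction s using Finset.induction with
  | empty => simp
  | @insert a s ha ih =>
    rw [Finset.sum_insert ha, ← ih]
    have : (fun x => ∑ i ∈ insert a s, f i x) = f a + fun x => ∑ i ∈ s, f i x := by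
      ext x
      simp [Finset.sum_insert ha]
    rw [this, withDensity_add_left (hf a)]

/-- Change of measure formula for the Rényi integrand. -/
lemma aux_change {X : Type*} [MeasurableSpace X] {μ ν lam : Measure X}
    [IsFiniteMeasure μ] [IsFiniteMeasure ν] [IsFiniteMeasure lam]
    (hμν : μ ≪ ν) (hνlam : ν ≪ lam) {α : ℝ} (hα : 1 < α) :
    ∫⁻ x, μ.rnDeriv ν x ^ α ∂ν
      = ∫⁻ x, μ.rnDeriv lam x ^ α * ν.rnDeriv lam x ^ (1 - α) ∂lam := by
  have hα0 : (0:ℝ) < α := by linarith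
  have h1α : (1:ℝ) - α < 0 := by linarith
  have hwd := Measure.withDensity_rnDeriv_eq ν lam hνlam
  have hgm : Measurable fun x => μ.rnDeriv ν x ^ α := (mRpow α).comp (μ.measurable_rnDeriv ν)
  nth_rewrite 1 [← hwd]
  rw [lintegral_withDensity_eq_lintegral_mul _ (ν.measurable_rnDeriv lam) hgm]
  refine lintegral_congr_ae ?_
  filter_upwards [Measure.rnDeriv_mul_rnDeriv hμν (κ := lam), ν.rnDeriv_lt_top lam]
    with x hx hxlt
  simp only [Pi.mul_apply] at hx ⊢
  rcases eq_or_ne (ν.rnDeriv lam x) 0 with hg | hg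
  · rw [← hx, hg, mul_zero, ENNReal.zero_rpow_of_pos hα0, zero_mul, zero_mul]
  · rw [← hx, ENNReal.mul_rpow_of_nonneg _ _ hα0.le, mul_assoc,
      ← ENNReal.rpow_add _ _ hg hxlt.ne]
    have : α + (1 - α) = 1 := by ring
    rw [this, ENNReal.rpow_one, mul_comm]

/-- Joint quasi-convexity of `exp((α-1) D_α)` in both arguments (Lemma 4.1 of
Ye and Shokri): for mixtures with weights `p_i`,
`exp((α-1) D_α(∑ pᵢμᵢ ‖ ∑ pᵢνᵢ)) ≤ ∑ pᵢ exp((α-1) D_α(μᵢ‖νᵢ))`. -/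
theorem renyi_joint_quasi_convexity {d m : ℕ} (α : ℝ) (hα : 1 < α)
    (μ ν : Fin m → Measure (EuclideanSpace ℝ (Fin d)))
    [∀ i, IsProbabilityMeasure (μ i)] [∀ i, IsProbabilityMeasure (ν i)]
    (p : Fin m → ℝ) (hp : ∀ i, 0 ≤ p i) (hp1 : ∑ i, p i = 1) :
    EReal.exp (((α - 1 : ℝ) : EReal) *
        renyiDiv α (∑ i, ENNReal.ofReal (p i) • μ i) (∑ i, ENNReal.ofReal (p i) • ν i)) ≤
      ∑ i, ENNReal.ofReal (p i) *
        EReal.exp (((α - 1 : ℝ) : EReal) * renyiDiv α (μ i) (ν i)) := by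
  classical
  have hα0 : (0:ℝ) < α := by linarith
  have hαne : α - 1 ≠ 0 := by linarith
  have hexp : ∀ (μ' ν' : Measure (EuclideanSpace ℝ (Fin d))), μ' ≪ ν' →
      EReal.exp (((α - 1 : ℝ) : EReal) * renyiDiv α μ' ν')
        = ∫⁻ x, μ'.rnDeriv ν' x ^ α ∂ν' := by
    intro μ' ν' h
    rw [renyiDiv, if_pos h, ← mul_assoc, ← EReal.coe_mul, mul_inv_cancel₀ hαne, EReal.coe_one,
      one_mul, ENNReal.exp_log]
  by_cases hac : ∀ i, p i ≠ 0 → μ i ≪ ν i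
  swap
  · push_neg at hac
    obtain ⟨i, hpi, hni⟩ := hac
    have hterm : ENNReal.ofReal (p i)
        * EReal.exp (((α - 1 : ℝ) : EReal) * renyiDiv α (μ i) (ν i)) = ⊤ := by
      rw [renyiDiv, if_neg hni, EReal.mul_top_of_pos (by exact_mod_cast sub_pos.2 hα),
        EReal.exp_top, ENNReal.mul_top
          (fun h => hpi (le_antisymm (ENNReal.ofReal_eq_zero.1 h) (hp i)))]
    calc _ ≤ (⊤ : ℝ≥0∞) := le_top
      _ = ENNReal.ofReal (p i)
          * EReal.exp (((α - 1 : ℝ) : EReal) * renyiDiv α (μ i) (ν i)) := hterm.symm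
      _ ≤ _ := Finset.single_le_sum
          (f := fun j => ENNReal.ofReal (p j)
            * EReal.exp (((α - 1 : ℝ) : EReal) * renyiDiv α (μ j) (ν j)))
          (fun j _ => zero_le) (Finset.mem_univ i)
  -- main case
  set L : Measure (EuclideanSpace ℝ (Fin d)) := ∑ i, (μ i + ν i) with hLdef
  haveI hLfin : IsFiniteMeasure L := by
    constructor
    rw [hLdef, Measure.finset_sum_apply]
    exact ENNReal.sum_lt_top.2 fun i _ => measure_lt_top _ _
  have hcomp : ∀ i : Fin m, ∀ s : Set (EuclideanSpace ℝ (Fin d)),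
      L s = 0 → μ i s = 0 ∧ ν i s = 0 := by
    intro i s h0
    rw [hLdef, Measure.finset_sum_apply] at h0
    have := (Finset.sum_eq_zero_iff.1 h0) i (Finset.mem_univ i)
    rw [Measure.add_apply, add_eq_zero] at this
    exact this
  have hμL : ∀ i, μ i ≪ L := fun i =>
    Measure.AbsolutelyContinuous.mk fun s _ h0 => (hcomp i s h0).1
  have hνL : ∀ i, ν i ≪ L := fun i =>
    Measure.AbsolutelyContinuous.mk fun s _ h0 => (hcomp i s h0).2
  haveI hMμfin : IsFiniteMeasure (∑ i, ENNReal.ofReal (p i) • μ i) := by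
    constructor
    rw [Measure.finset_sum_apply]
    exact ENNReal.sum_lt_top.2 fun i _ => by
      rw [Measure.smul_apply, smul_eq_mul]
      exact ENNReal.mul_lt_top ENNReal.ofReal_lt_top (measure_lt_top _ _)
  haveI hMνfin : IsFiniteMeasure (∑ i, ENNReal.ofReal (p i) • ν i) := by
    constructor
    rw [Measure.finset_sum_apply]
    exact ENNReal.sum_lt_top.2 fun i _ => by
      rw [Measure.smul_apply, smul_eq_mul]
      exact ENNReal.mul_lt_top ENNReal.ofReal_lt_top (measure_lt_top _ _)
  have hMνL : (∑ i, ENNReal.ofReal (p i) • ν i) ≪ L := by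
    refine Measure.AbsolutelyContinuous.mk fun s hs hLs => ?_
    rw [Measure.finset_sum_apply]
    exact Finset.sum_eq_zero fun i _ => by
      rw [Measure.smul_apply, smul_eq_mul, (hνL i) hLs, mul_zero]
  have hMac : (∑ i, ENNReal.ofReal (p i) • μ i) ≪ (∑ i, ENNReal.ofReal (p i) • ν i) := by
    refine Measure.AbsolutelyContinuous.mk fun s hs h0 => ?_
    rw [Measure.finset_sum_apply] at h0 ⊢
    have h0' := Finset.sum_eq_zero_iff.1 h0
    refine Finset.sum_eq_zero fun i _ => ?_
    rcases eq_or_ne (p i) 0 with hpi | hpi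
    · simp [hpi]
    · have hνi : ν i s = 0 := by
        have := h0' i (Finset.mem_univ i)
        rw [Measure.smul_apply, smul_eq_mul, mul_eq_zero] at this
        rcases this with h | h
        · exact absurd h (fun h => hpi (le_antisymm (ENNReal.ofReal_eq_zero.1 h) (hp i)))
        · exact h
      rw [Measure.smul_apply, smul_eq_mul, (hac i hpi) hνi, mul_zero]
  -- densities
  have hmf : ∀ i : Fin m, Measurable fun x => ENNReal.ofReal (p i) * (μ i).rnDeriv L x :=
    fun i => ((μ i).measurable_rnDeriv L).const_mul _
  have hmg : ∀ i : Fin m, Measurable fun x => ENNReal.ofReal (p i) * (ν i).rnDeriv L x :=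
    fun i => ((ν i).measurable_rnDeriv L).const_mul _
  have hMμ_eq : (∑ i, ENNReal.ofReal (p i) • μ i)
      = L.withDensity (fun x => ∑ i, ENNReal.ofReal (p i) * (μ i).rnDeriv L x) := by
    rw [aux_withDensity_finset_sum _ _ _ hmf]
    refine Finset.sum_congr rfl fun i _ => ?_
    have : (fun x => ENNReal.ofReal (p i) * (μ i).rnDeriv L x)
        = ENNReal.ofReal (p i) • (μ i).rnDeriv L := rfl
    rw [this, withDensity_smul' _ _ ENNReal.ofReal_ne_top,
      @Measure.withDensity_rnDeriv_eq _ _ _ _ (Measure.haveLebesgueDecomposition_of_sigmaFinite _ _) (hμL i)]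
  have hMν_eq : (∑ i, ENNReal.ofReal (p i) • ν i)
      = L.withDensity (fun x => ∑ i, ENNReal.ofReal (p i) * (ν i).rnDeriv L x) := by
    rw [aux_withDensity_finset_sum _ _ _ hmg]
    refine Finset.sum_congr rfl fun i _ => ?_
    have : (fun x => ENNReal.ofReal (p i) * (ν i).rnDeriv L x)
        = ENNReal.ofReal (p i) • (ν i).rnDeriv L := rfl
    rw [this, withDensity_smul' _ _ ENNReal.ofReal_ne_top,
      @Measure.withDensity_rnDeriv_eq _ _ _ _ (Measure.haveLebesgueDecomposition_of_sigmaFinite _ _) (hνL i)]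
  have hF : (∑ i, ENNReal.ofReal (p i) • μ i).rnDeriv L
      =ᵐ[L] fun x => ∑ i, ENNReal.ofReal (p i) * (μ i).rnDeriv L x := by
    rw [hMμ_eq]
    exact Measure.rnDeriv_withDensity L (Finset.measurable_sum _ fun i _ => hmf i)
  have hG : (∑ i, ENNReal.ofReal (p i) • ν i).rnDeriv L
      =ᵐ[L] fun x => ∑ i, ENNReal.ofReal (p i) * (ν i).rnDeriv L x := by
    rw [hMν_eq]
    exact Measure.rnDeriv_withDensity L (Finset.measurable_sum _ fun i _ => hmg i)
  have hmint : ∀ i : Fin m,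
      Measurable fun x => (μ i).rnDeriv L x ^ α * (ν i).rnDeriv L x ^ (1 - α) :=
    fun i => ((mRpow α).comp ((μ i).measurable_rnDeriv L)).mul
      ((mRpow (1 - α)).comp ((ν i).measurable_rnDeriv L))
  rw [hexp _ _ hMac]
  calc ∫⁻ x, (∑ i, ENNReal.ofReal (p i) • μ i).rnDeriv (∑ i, ENNReal.ofReal (p i) • ν i) x ^ α
        ∂(∑ i, ENNReal.ofReal (p i) • ν i)
      = ∫⁻ x, (∑ i, ENNReal.ofReal (p i) • μ i).rnDeriv L x ^ α
          * (∑ i, ENNReal.ofReal (p i) • ν i).rnDeriv L x ^ (1 - α) ∂L :=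
        aux_change hMac hMνL hα
    _ = ∫⁻ x, (∑ i, ENNReal.ofReal (p i) * (μ i).rnDeriv L x) ^ α
          * (∑ i, ENNReal.ofReal (p i) * (ν i).rnDeriv L x) ^ (1 - α) ∂L := by
        refine lintegral_congr_ae ?_
        filter_upwards [hF, hG] with x h1 h2
        rw [h1, h2]
    _ ≤ ∫⁻ x, ∑ i, ENNReal.ofReal (p i)
          * ((μ i).rnDeriv L x ^ α * (ν i).rnDeriv L x ^ (1 - α)) ∂L := by
        refine lintegral_mono fun x => ?_
        refine le_trans (aux_holder_sum hα _ _) (le_of_eq ?_)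
        exact Finset.sum_congr rfl fun i _ => aux_hom hα ENNReal.ofReal_ne_top _ _
    _ = ∑ i, ENNReal.ofReal (p i)
          * ∫⁻ x, (μ i).rnDeriv L x ^ α * (ν i).rnDeriv L x ^ (1 - α) ∂L := by
        rw [lintegral_finset_sum _ (fun i _ => ((hmint i).const_mul _))]
        exact Finset.sum_congr rfl fun i _ => lintegral_const_mul _ (hmint i)
    _ ≤ ∑ i, ENNReal.ofReal (p i)
          * EReal.exp (((α - 1 : ℝ) : EReal) * renyiDiv α (μ i) (ν i)) := by
        refine Finset.sum_le_sum fun i _ => ?_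
        rcases eq_or_ne (p i) 0 with hpi | hpi
        · simp [hpi]
        · rw [hexp _ _ (hac i hpi), aux_change (hac i hpi) (hνL i) hα]
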